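/- Let C be a real symmetric conference matrix of order r and H a real symmetric Hadamard matrix of order k with n = rk. Then A := (1/2)(C ⊗ H + K_r ⊗ J_k) is the adjacency matrix of an r-partite graph G of order n whose trace norm satisfies ‖G‖_* ≥ (n^(3/2)/2)·sqrt(1 − 1/r) − (1 − 1/r)·n. -/

import Mathlib

open Matrix BigOperators Kronecker

/-- The singular values of a square matrix `A` over an `RCLike` field: the square roots of the
eigenvalues of the Hermitian matrix `A * Aᴴ`. -/
noncomputable def singularValues {𝕜 : Type*} [RCLike 𝕜] {m : Type*} [Fintype m] [DecidableEq m]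
    (A : Matrix m m 𝕜) : m → ℝ :=
  fun i => Real.sqrt ((Matrix.isHermitian_mul_conjTranspose_self A).eigenvalues i)

/-- The trace norm (nuclear norm) of a square matrix: the sum of its singular values. -/
noncomputable def traceNorm {𝕜 : Type*} [RCLike 𝕜] {m : Type*} [Fintype m] [DecidableEq m]
    (A : Matrix m m 𝕜) : ℝ :=
  ∑ i, singularValues A i

set_option linter.unusedSectionVars false

section aux
variable {m : Type*} [Fintype m] [DecidableEq m]

private lemma dot_sq_sum (x : m → ℝ) : x ⬝ᵥ x = ∑ i, x i ^ 2 := by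
  simp [dotProduct, sq]

private lemma dot_self_nonneg (x : m → ℝ) : 0 ≤ x ⬝ᵥ x := by
  rw [dot_sq_sum]; positivity

private lemma dot_cs (x y : m → ℝ) : x ⬝ᵥ y ≤ Real.sqrt (x ⬝ᵥ x) * Real.sqrt (y ⬝ᵥ y) := by
  have h := Finset.sum_mul_sq_le_sq_mul_sq Finset.univ x y
  have h2 : (x ⬝ᵥ y) ^ 2 ≤ (x ⬝ᵥ x) * (y ⬝ᵥ y) := by
    rw [dot_sq_sum, dot_sq_sum]; simpa [dotProduct] using h
  calc x ⬝ᵥ y ≤ |x ⬝ᵥ y| := le_abs_self _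
    _ = Real.sqrt ((x ⬝ᵥ y) ^ 2) := (Real.sqrt_sq_eq_abs _).symm
    _ ≤ Real.sqrt ((x ⬝ᵥ x) * (y ⬝ᵥ y)) := Real.sqrt_le_sqrt h2
    _ = _ := Real.sqrt_mul (dot_self_nonneg x) _

private lemma abs_dot_cs (x y : m → ℝ) :
    |x ⬝ᵥ y| ≤ Real.sqrt (x ⬝ᵥ x) * Real.sqrt (y ⬝ᵥ y) := by
  rcases abs_cases (x ⬝ᵥ y) with ⟨h, _⟩ | ⟨h, _⟩
  · rw [h]; exact dot_cs x y
  · rw [h]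
    have := dot_cs (-x) y
    simpa [neg_dotProduct] using this

private lemma mulVec_dot_mulVec (M N : Matrix m m ℝ) (x y : m → ℝ) :
    (M *ᵥ x) ⬝ᵥ (N *ᵥ y) = x ⬝ᵥ ((Mᵀ * N) *ᵥ y) := by
  conv_rhs => rw [← Matrix.mulVec_mulVec, Matrix.dotProduct_mulVec, Matrix.vecMul_transpose]

private lemma rpow_3div2 {x : ℝ} (hx : 0 ≤ x) : x ^ (3 / 2 : ℝ) = x * Real.sqrt x := by
  rw [show (3 / 2 : ℝ) = (1 / 2) * 3 by norm_num, Real.rpow_mul hx, ← Real.sqrt_eq_rpow,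
    show ((3 : ℝ) : ℝ) = ((3 : ℕ) : ℝ) by norm_num, Real.rpow_natCast,
    show (Real.sqrt x) ^ (3 : ℕ) = (Real.sqrt x * Real.sqrt x) * Real.sqrt x by ring,
    Real.mul_self_sqrt hx]

/-- Key inequality: if `Bᵀ B = c² I` then `tr (A B) ≤ c ‖A‖_*`. -/
private lemma trace_mul_le_traceNorm (A B : Matrix m m ℝ) (c : ℝ) (hc : 0 ≤ c)
    (hB : Bᵀ * B = (c ^ 2) • (1 : Matrix m m ℝ)) :
    (A * B).trace ≤ c * traceNorm A := by
  classical
  set hP := Matrix.isHermitian_mul_conjTranspose_self A with hPdef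
  set U : Matrix m m ℝ := (Matrix.IsHermitian.eigenvectorUnitary hP : Matrix m m ℝ) with hUdef
  have hU1 : star U * U = 1 :=
    Matrix.mem_unitaryGroup_iff'.mp (Matrix.IsHermitian.eigenvectorUnitary hP).2
  have hU2 : U * star U = 1 :=
    Matrix.mem_unitaryGroup_iff.mp (Matrix.IsHermitian.eigenvectorUnitary hP).2
  set μ : m → ℝ := hP.eigenvalues with hμdef
  set v : m → m → ℝ := fun i j => U j i with hv
  have hAH : Aᴴ = Aᵀ := by ext i j; simp [Matrix.conjTranspose_apply]
  have hspec : A * Aᴴ = U * Matrix.diagonal μ * star U := by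
    have := hP.spectral_theorem
    simp only [RCLike.ofReal_real_eq_id, Function.id_comp] at this
    exact this
  have hPU : (A * Aᴴ) * U = U * Matrix.diagonal μ := by
    rw [hspec, Matrix.mul_assoc, hU1, Matrix.mul_one]
  have heig : ∀ i, (A * Aᵀ) *ᵥ v i = μ i • v i := by
    intro i
    funext j
    have h := congrFun (congrFun hPU j) i
    rw [Matrix.mul_apply, Matrix.mul_diagonal] at h
    rw [hAH] at h
    simpa [Matrix.mulVec, dotProduct, hv, mul_comm] using h
  have hnorm : ∀ i, v i ⬝ᵥ v i = 1 := by
    intro i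
    have h := congrFun (congrFun hU1 i) i
    simp only [Matrix.mul_apply, Matrix.one_apply_eq] at h
    simpa [dotProduct, hv, Matrix.star_apply, mul_comm] using h
  have htr : (A * B).trace = ∑ i, v i ⬝ᵥ ((A * B) *ᵥ v i) := by
    have h1 : (star U * ((A * B) * U)).trace = (A * B).trace := by
      rw [Matrix.trace_mul_comm, Matrix.mul_assoc, hU2, Matrix.mul_one]
    rw [← h1, Matrix.trace]
    refine Finset.sum_congr rfl fun i _ => ?_
    simp only [Matrix.diag_apply, Matrix.mul_apply, Matrix.star_apply, star_trivial,
      Matrix.mulVec, dotProduct, hv, Finset.mul_sum, Finset.sum_mul]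
  have hbound : ∀ i, v i ⬝ᵥ ((A * B) *ᵥ v i) ≤ c * Real.sqrt (μ i) := by
    intro i
    have e1 : v i ⬝ᵥ ((A * B) *ᵥ v i) = (Aᵀ *ᵥ v i) ⬝ᵥ (B *ᵥ v i) := by
      rw [mulVec_dot_mulVec, Matrix.transpose_transpose]
    have e2 : (Aᵀ *ᵥ v i) ⬝ᵥ (Aᵀ *ᵥ v i) = μ i := by
      rw [mulVec_dot_mulVec, Matrix.transpose_transpose, heig i]
      simp [dotProduct_smul, hnorm i]
    have e3 : (B *ᵥ v i) ⬝ᵥ (B *ᵥ v i) = c ^ 2 := by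
      rw [mulVec_dot_mulVec, hB]
      simp [Matrix.smul_mulVec, Matrix.one_mulVec, dotProduct_smul, hnorm i]
    calc v i ⬝ᵥ ((A * B) *ᵥ v i) = (Aᵀ *ᵥ v i) ⬝ᵥ (B *ᵥ v i) := e1
      _ ≤ Real.sqrt ((Aᵀ *ᵥ v i) ⬝ᵥ (Aᵀ *ᵥ v i)) * Real.sqrt ((B *ᵥ v i) ⬝ᵥ (B *ᵥ v i)) :=
          dot_cs _ _
      _ = Real.sqrt (μ i) * c := by rw [e2, e3, Real.sqrt_sq hc]
      _ = c * Real.sqrt (μ i) := mul_comm _ _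
  calc (A * B).trace = ∑ i, v i ⬝ᵥ ((A * B) *ᵥ v i) := htr
    _ ≤ ∑ i, c * Real.sqrt (μ i) := Finset.sum_le_sum fun i _ => hbound i
    _ = c * traceNorm A := by rw [← Finset.mul_sum]; rfl

private lemma trace_allOnes_mul (M : Matrix m m ℝ) :
    ((Matrix.of fun _ _ => (1 : ℝ)) * M).trace = ∑ i, ∑ j, M i j := by
  simp only [Matrix.trace, Matrix.diag_apply, Matrix.mul_apply, Matrix.of_apply, one_mul]
  exact Finset.sum_comm

private lemma sum_sum_abs_bound (M : Matrix m m ℝ) (d : ℝ)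
    (hM : Mᵀ * M = d • (1 : Matrix m m ℝ)) :
    |∑ i, ∑ j, M i j| ≤ Real.sqrt (Fintype.card m) * Real.sqrt (d * Fintype.card m) := by
  set o : m → ℝ := fun _ => 1 with ho
  have h1 : (∑ i, ∑ j, M i j) = o ⬝ᵥ (M *ᵥ o) := by
    simp [dotProduct, Matrix.mulVec, ho]
  have h2 : (M *ᵥ o) ⬝ᵥ (M *ᵥ o) = d * Fintype.card m := by
    rw [mulVec_dot_mulVec, hM]
    simp [Matrix.smul_mulVec, Matrix.one_mulVec, dotProduct_smul, dotProduct, ho,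
      Finset.card_univ, mul_comm]
  have h3 : o ⬝ᵥ o = Fintype.card m := by simp [dotProduct, ho, Finset.card_univ]
  rw [h1]
  calc |o ⬝ᵥ (M *ᵥ o)| ≤ Real.sqrt (o ⬝ᵥ o) * Real.sqrt ((M *ᵥ o) ⬝ᵥ (M *ᵥ o)) := abs_dot_cs _ _
    _ = _ := by rw [h2, h3]

end aux
/-- if `C` is a real symmetric conference matrix of order `r` and `H` a real
symmetric Hadamard matrix of order `k`, `n = r k`, then
`A = (1/2)(C ⊗ H + (J_r - I_r) ⊗ J_k)` is the adjacency matrix of an `r`-partite graph `G`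
(the parts being the `r` blocks of size `k`) with
`‖G‖_* ≥ (n^(3/2)/2) √(1 - 1/r) - (1 - 1/r) n`. -/
theorem exists_r_partite_graph_large_energy {r k : ℕ}
    (C : Matrix (Fin r) (Fin r) ℝ) (hCsymm : C.IsSymm)
    (hCdiag : ∀ i, C i i = 0)
    (hCoff : ∀ i j, i ≠ j → C i j = 1 ∨ C i j = -1)
    (hC : C * C = ((r : ℝ) - 1) • 1)
    (H : Matrix (Fin k) (Fin k) ℝ) (hHsymm : H.IsSymm)
    (hHent : ∀ i j, H i j = 1 ∨ H i j = -1)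
    (hH : H * H = (k : ℝ) • 1)
    (A : Matrix (Fin r × Fin k) (Fin r × Fin k) ℝ)
    (hA : A = (1 / 2 : ℝ) •
      (C ⊗ₖ H + ((Matrix.of fun _ _ => (1 : ℝ)) - (1 : Matrix (Fin r) (Fin r) ℝ)) ⊗ₖ
        (Matrix.of fun _ _ => (1 : ℝ)))) :
    (∃ (G : SimpleGraph (Fin r × Fin k)) (inst : DecidableRel G.Adj),
        G.Colorable r ∧ @SimpleGraph.adjMatrix ℝ _ G inst _ _ = A) ∧
    traceNorm A ≥ ((r * k : ℕ) : ℝ) ^ (3 / 2 : ℝ) / 2 * Real.sqrt (1 - 1 / r) -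
      (1 - 1 / r) * (r * k : ℕ) := by
  classical
  have hAapp : ∀ (i : Fin r) (a : Fin k) (j : Fin r) (b : Fin k),
      A (i, a) (j, b) = 1 / 2 * (C i j * H a b + (if i = j then 0 else 1)) := by
    intro i a j b
    rw [hA]
    by_cases h : i = j <;>
      simp [h, Matrix.smul_apply, Matrix.add_apply, Matrix.sub_apply, Matrix.kroneckerMap_apply,
        Matrix.one_apply, Matrix.of_apply]
  have hdiag : ∀ (i : Fin r) (a b : Fin k), A (i, a) (i, b) = 0 := by
    intro i a b; rw [hAapp]; simp [hCdiag i]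
  have hsymmE : ∀ u v : Fin r × Fin k, A u v = A v u := by
    rintro ⟨i, a⟩ ⟨j, b⟩
    by_cases h : i = j
    · subst h
      rw [hAapp, hAapp, hHsymm.apply a b]
    · rw [hAapp, hAapp, if_neg h, if_neg (Ne.symm h), hCsymm.apply i j, hHsymm.apply a b]
  have hoff : ∀ (i : Fin r) (a : Fin k) (j : Fin r) (b : Fin k), i ≠ j →
      A (i, a) (j, b) = 0 ∨ A (i, a) (j, b) = 1 := by
    intro i a j b h
    rw [hAapp, if_neg h]
    rcases hCoff i j h with hc | hc <;> rcases hHent a b with hh | hh <;> rw [hc, hh] <;> norm_num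
  constructor
  · -- the graph part
    refine ⟨{ Adj := fun u v => A u v = 1
              symm := ⟨fun u v h => by
                show A v u = 1
                rw [hsymmE v u]; exact h⟩
              loopless := ⟨fun u h => by
                obtain ⟨i, a⟩ := u
                have h1 : A (i, a) (i, a) = 1 := h
                rw [hdiag] at h1
                norm_num at h1⟩ },
        fun u v => Classical.dec _, ?_, ?_⟩
    · exact ⟨SimpleGraph.Coloring.mk (fun u => u.1) (by
        rintro ⟨i, a⟩ ⟨j, b⟩ hadj heq
        simp only at heq
        subst heq
        have h1 : A (i, a) (i, b) = 1 := hadj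
        rw [hdiag] at h1
        norm_num at h1)⟩
    · ext ⟨i, a⟩ ⟨j, b⟩
      rw [SimpleGraph.adjMatrix_apply]
      by_cases hadj : A (i, a) (j, b) = 1
      · rw [if_pos hadj, hadj]
      · rw [if_neg hadj]
        by_cases h : i = j
        · subst h; rw [hdiag]
        · rcases hoff i a j b h with h0 | h1
          · rw [h0]
          · exact absurd h1 hadj
  · -- the trace norm bound
    have htn0 : 0 ≤ traceNorm A := Finset.sum_nonneg fun i _ => Real.sqrt_nonneg _
    rcases Nat.eq_zero_or_pos r with hr0 | hrpos
    · subst hr0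
      simp only [Nat.zero_mul, Nat.cast_zero, Real.zero_rpow (by norm_num : (3 / 2 : ℝ) ≠ 0)]
      simpa using htn0
    rcases Nat.eq_zero_or_pos k with hk0 | hkpos
    · subst hk0
      simp only [Nat.mul_zero, Nat.cast_zero, Real.zero_rpow (by norm_num : (3 / 2 : ℝ) ≠ 0)]
      simpa using htn0
    by_cases hr1 : r = 1
    · subst hr1
      norm_num
      simpa using htn0
    -- main case : r ≥ 2, k ≥ 1
    have hr2 : 2 ≤ r := by omega
    have hrR : (2 : ℝ) ≤ (r : ℝ) := by exact_mod_cast hr2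
    have hkR : (1 : ℝ) ≤ (k : ℝ) := by exact_mod_cast hkpos
    have hrne : (r : ℝ) ≠ 0 := by positivity
    set c : ℝ := Real.sqrt (((r : ℝ) - 1) * k) with hcdef
    have hc0 : 0 ≤ c := Real.sqrt_nonneg _
    have hcsq : c ^ 2 = ((r : ℝ) - 1) * k := Real.sq_sqrt (by nlinarith)
    have hcpos : 0 < c := Real.sqrt_pos.mpr (by nlinarith)
    set B := C ⊗ₖ H with hBdef
    set N := ((Matrix.of fun _ _ => (1 : ℝ)) - (1 : Matrix (Fin r) (Fin r) ℝ)) ⊗ₖ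
      (Matrix.of fun _ _ => (1 : ℝ)) with hNdef
    have hCt : Cᵀ = C := hCsymm
    have hHt : Hᵀ = H := hHsymm
    have hBt : Bᵀ = B := by
      rw [hBdef, ← Matrix.kroneckerMap_transpose, hCt, hHt]
    have hBB : B * B = (((r : ℝ) - 1) * k) • (1 : Matrix (Fin r × Fin k) (Fin r × Fin k) ℝ) := by
      rw [hBdef, ← Matrix.mul_kronecker_mul, hC, hH, Matrix.smul_kronecker,
        Matrix.kronecker_smul, Matrix.one_kronecker_one, smul_smul]
    have hB' : Bᵀ * B = (c ^ 2) • (1 : Matrix (Fin r × Fin k) (Fin r × Fin k) ℝ) := by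
      rw [hBt, hBB, hcsq]
    have hkey := trace_mul_le_traceNorm A B c hc0 hB'
    -- trace computation
    set sC := ∑ i, ∑ j, C i j with hsCdef
    set sH := ∑ a, ∑ b, H a b with hsHdef
    have htrBB : (B * B).trace = (((r : ℝ) - 1) * k) * ((r : ℝ) * k) := by
      rw [hBB, Matrix.trace_smul, Matrix.trace_one]
      simp [Fintype.card_prod, smul_eq_mul]
    have htrNB : (N * B).trace = sC * sH := by
      rw [hNdef, hBdef, ← Matrix.mul_kronecker_mul, Matrix.trace_kronecker]
      have h1 : ((((Matrix.of fun _ _ => (1 : ℝ)) - 1)) * C).trace = sC := by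
        rw [Matrix.sub_mul, Matrix.trace_sub, Matrix.one_mul, trace_allOnes_mul]
        simp [Matrix.trace, Matrix.diag_apply, hCdiag, hsCdef]
      have h2 : ((Matrix.of fun _ _ => (1 : ℝ)) * H).trace = sH := by
        rw [trace_allOnes_mul]
      rw [h1, h2]
    have htrAB : (A * B).trace = 1 / 2 * ((((r : ℝ) - 1) * k) * ((r : ℝ) * k) + sC * sH) := by
      have : A * B = (1 / 2 : ℝ) • (B * B + N * B) := by
        rw [hA, Matrix.smul_mul, Matrix.add_mul]
      rw [this, Matrix.trace_smul, Matrix.trace_add, htrBB, htrNB, smul_eq_mul]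
    -- bounds on sC, sH
    have hsCb : |sC| ≤ Real.sqrt r * Real.sqrt (((r : ℝ) - 1) * r) := by
      have := sum_sum_abs_bound C ((r : ℝ) - 1) (by rw [hCt, hC])
      simpa [Fintype.card_fin] using this
    have hsHb : |sH| ≤ Real.sqrt k * Real.sqrt ((k : ℝ) * k) := by
      have := sum_sum_abs_bound H ((k : ℝ)) (by rw [hHt, hH])
      simpa [Fintype.card_fin] using this
    have habs : |sC * sH| ≤ (Real.sqrt r * Real.sqrt (((r : ℝ) - 1) * r)) *
        (Real.sqrt k * Real.sqrt ((k : ℝ) * k)) := by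
      rw [abs_mul]
      exact mul_le_mul hsCb hsHb (abs_nonneg _) (by positivity)
    have hRHSle : (Real.sqrt r * Real.sqrt (((r : ℝ) - 1) * r)) *
        (Real.sqrt k * Real.sqrt ((k : ℝ) * k)) ≤ 2 * ((r : ℝ) - 1) * k * c := by
      have e1 : Real.sqrt (((r : ℝ) - 1) * r) = Real.sqrt ((r : ℝ) - 1) * Real.sqrt r :=
        Real.sqrt_mul (by linarith) _
      have e2 : Real.sqrt ((k : ℝ) * k) = k := Real.sqrt_mul_self (by positivity)
      have e3 : c = Real.sqrt ((r : ℝ) - 1) * Real.sqrt k := by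
        rw [hcdef, Real.sqrt_mul (by linarith)]
      have e4 : Real.sqrt (r : ℝ) * Real.sqrt r = r := Real.mul_self_sqrt (by positivity)
      rw [e1, e2, e3]
      have ha : 0 ≤ Real.sqrt ((r : ℝ) - 1) := Real.sqrt_nonneg _
      have hb : 0 ≤ Real.sqrt (k : ℝ) := Real.sqrt_nonneg _
      have h5 : (r : ℝ) ≤ 2 * ((r : ℝ) - 1) := by linarith
      have h6 : Real.sqrt r * (Real.sqrt ((r : ℝ) - 1) * Real.sqrt r) * (Real.sqrt k * k) =
          (r : ℝ) * (Real.sqrt ((r : ℝ) - 1) * Real.sqrt k * k) := by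
        linear_combination (Real.sqrt ((r : ℝ) - 1) * Real.sqrt (k : ℝ) * (k : ℝ)) * e4
      have h7 : 2 * ((r : ℝ) - 1) * k * (Real.sqrt ((r : ℝ) - 1) * Real.sqrt k) =
          (2 * ((r : ℝ) - 1)) * (Real.sqrt ((r : ℝ) - 1) * Real.sqrt k * k) := by ring
      rw [h6, h7]
      have h8 : 0 ≤ Real.sqrt ((r : ℝ) - 1) * Real.sqrt k * k := by positivity
      exact mul_le_mul_of_nonneg_right h5 h8
    have hprod : -(2 * ((r : ℝ) - 1) * k * c) ≤ sC * sH := by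
      have h9 := neg_abs_le (sC * sH)
      linarith
    -- final arithmetic
    have hncast : ((r * k : ℕ) : ℝ) = (r : ℝ) * k := by push_cast; ring
    have hn0 : (0 : ℝ) ≤ (r : ℝ) * k := by positivity
    have e5 : ((r * k : ℕ) : ℝ) ^ (3 / 2 : ℝ) = ((r : ℝ) * k) * Real.sqrt ((r : ℝ) * k) := by
      rw [hncast, rpow_3div2 hn0]
    have e6 : Real.sqrt ((r : ℝ) * k) * Real.sqrt (1 - 1 / (r : ℕ)) = c := by
      rw [← Real.sqrt_mul hn0, hcdef]
      congr 1
      field_simp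
    have e8 : (1 - 1 / ((r : ℕ) : ℝ)) * ((r * k : ℕ) : ℝ) = ((r : ℝ) - 1) * k := by
      rw [hncast]
      field_simp
    have hgoal : ((r * k : ℕ) : ℝ) ^ (3 / 2 : ℝ) / 2 * Real.sqrt (1 - 1 / (r : ℕ)) -
        (1 - 1 / ((r : ℕ) : ℝ)) * ((r * k : ℕ) : ℝ) =
        ((r : ℝ) * k) * c / 2 - ((r : ℝ) - 1) * k := by
      rw [e5, e8, div_mul_eq_mul_div, mul_assoc, e6]
    rw [ge_iff_le, hgoal]
    have hstep : ((r : ℝ) * k) * c / 2 - ((r : ℝ) - 1) * k ≤ (A * B).trace / c := by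
      rw [le_div_iff₀ hcpos, htrAB]
      have hcc : c * c = ((r : ℝ) - 1) * k := by rw [← hcsq]; ring
      have hexp : ((r : ℝ) * k * c / 2 - ((r : ℝ) - 1) * k) * c =
          (r : ℝ) * k * (c * c) / 2 - ((r : ℝ) - 1) * k * c := by ring
      rw [hexp, hcc]
      linarith [hprod]
    have hstep2 : (A * B).trace / c ≤ traceNorm A := by
      rw [div_le_iff₀ hcpos]
      exact le_trans hkey (le_of_eq (mul_comm _ _))
    linarith
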